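/- Let Γ be a finitely generated group with word length ℓ and let d > 0. Suppose φ : P_d(Γ) → [0,1] is a continuous function on the d-Rips complex, compactly supported in W_d(Γ) (measures supported in the ball B(e,2d)), with Σ_{γ∈Γ} φ(γ·x) = 1 for every x ∈ P_d(Γ). Then the function e_φ : Γ → C₀(P_d(Γ)) given by e_φ(γ)(x) = φ(x)^{1/2} · φ(γ⁻¹ x)^{1/2} defines a self-adjoint idempotent (projection) in the reduced crossed product C₀(P_d(Γ)) ⋊ᵣ Γ, whose support {γ : e_φ(γ) ≠ 0} is contained in {γ : γ W_d(Γ) ∩ W_d(Γ) ≠ ∅}. -/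

import Mathlib

open scoped ENNReal

/-- The `d`-Rips complex of a group `Γ` with length function `ℓ`: finitely supported
probability measures on `Γ` whose support has diameter at most `d` for the (left-invariant)
metric induced by `ℓ`. -/
def RipsCplx (Γ : Type*) [Group Γ] (ℓ : Γ → ℝ) (d : ℝ) : Type _ :=
  {h : Γ →₀ ℝ // (∀ γ, 0 ≤ h γ) ∧ (h.sum fun _ x => x) = 1 ∧
    ∀ γ ∈ h.support, ∀ γ' ∈ h.support, ℓ (γ⁻¹ * γ') ≤ d}

namespace RipsCplx

variable {Γ : Type*} [Group Γ] {ℓ : Γ → ℝ} {d : ℝ}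

/-- The canonical embedding of the Rips complex into `ℓ^∞(Γ)`, inducing the sup-norm
distance. -/
noncomputable def toLinf (h : RipsCplx Γ ℓ d) : lp (fun _ : Γ => ℝ) ∞ :=
  ⟨fun γ => h.1 γ, memℓp_infty <| by
    have hsub : (Set.range fun γ => ‖h.1 γ‖) ⊆
        insert (0 : ℝ) ((fun γ => ‖h.1 γ‖) '' ↑h.1.support) := by
      rintro x ⟨γ, rfl⟩
      by_cases hγ : γ ∈ h.1.support
      · exact Set.mem_insert_of_mem _ ⟨γ, hγ, rfl⟩
      · simp [Finsupp.notMem_support_iff.mp hγ]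
    exact Set.Finite.bddAbove <|
      ((h.1.support.finite_toSet.image _).insert _).subset hsub⟩

theorem toLinf_injective : Function.Injective (toLinf (Γ := Γ) (ℓ := ℓ) (d := d)) := by
  intro h g hhg
  have hfun : ∀ γ, h.1 γ = g.1 γ := fun γ => congrFun (congrArg Subtype.val hhg) γ
  exact Subtype.ext (Finsupp.ext hfun)

/-- The sup-norm metric on the Rips complex. -/
noncomputable instance : MetricSpace (RipsCplx Γ ℓ d) :=
  MetricSpace.induced toLinf toLinf_injective inferInstance

/-- Left translation action of `Γ` on the Rips complex: `(γ • h)(γ') = h (γ⁻¹ γ')`. -/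
noncomputable def translate (γ : Γ) (h : RipsCplx Γ ℓ d) : RipsCplx Γ ℓ d :=
  ⟨Finsupp.equivMapDomain (Equiv.mulLeft γ) h.1, by
    intro y
    rw [Finsupp.equivMapDomain_apply]
    exact h.2.1 _, by
    rw [Finsupp.sum_equivMapDomain]
    exact h.2.2.1, by
    intro a ha b hb
    rw [Finsupp.mem_support_iff, Finsupp.equivMapDomain_apply] at ha hb
    have := h.2.2.2 _ (Finsupp.mem_support_iff.mpr ha) _ (Finsupp.mem_support_iff.mpr hb)
    simp only [Equiv.mulLeft_symm, Equiv.coe_mulLeft] at this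
    calc ℓ (a⁻¹ * b) = ℓ ((γ⁻¹ * a)⁻¹ * (γ⁻¹ * b)) := by group
    _ ≤ d := this⟩

/-- The subset `W_d(Γ)` of the Rips complex: measures supported in the ball `B(e, 2d)`. -/
def Wset (Γ : Type*) [Group Γ] (ℓ : Γ → ℝ) (d : ℝ) : Set (RipsCplx Γ ℓ d) :=
  {h | ∀ γ ∈ h.1.support, ℓ γ ≤ 2 * d}

/-- The subset `V_d(Γ)` of the Rips complex: measures supported in the ball `B(e, d)`. -/
def Vset (Γ : Type*) [Group Γ] (ℓ : Γ → ℝ) (d : ℝ) : Set (RipsCplx Γ ℓ d) :=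
  {h | ∀ γ ∈ h.1.support, ℓ γ ≤ d}

end RipsCplx

theorem RipsCplx.translate_translate {Γ : Type*} [Group Γ] {ℓ : Γ → ℝ} {d : ℝ}
    (a b : Γ) (x : RipsCplx Γ ℓ d) :
    translate a (translate b x) = translate (a * b) x := by
  apply Subtype.ext
  ext γ
  show x.1 ((Equiv.mulLeft b).symm ((Equiv.mulLeft a).symm γ))
      = x.1 ((Equiv.mulLeft (a * b)).symm γ)
  have : (Equiv.mulLeft b).symm ((Equiv.mulLeft a).symm γ)
      = (Equiv.mulLeft (a * b)).symm γ := by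
    rw [Equiv.mulLeft_symm, Equiv.mulLeft_symm, Equiv.mulLeft_symm,
      Equiv.coe_mulLeft, Equiv.coe_mulLeft, Equiv.coe_mulLeft];
    show b⁻¹ * (a⁻¹ * γ) = (a * b)⁻¹ * γ;
    group
  exact congrArg x.1 this

theorem RipsCplx.translate_one {Γ : Type*} [Group Γ] {ℓ : Γ → ℝ} {d : ℝ}
    (x : RipsCplx Γ ℓ d) : translate (1 : Γ) x = x := by
  apply Subtype.ext
  ext γ
  show x.1 ((Equiv.mulLeft (1 : Γ)).symm γ) = x.1 γ
  rw [Equiv.mulLeft_symm, Equiv.coe_mulLeft, inv_one]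
  exact congrArg x.1 (one_mul γ)

open RipsCplx in
/-- Let `Γ` be a finitely generated group with word length `ℓ` (a proper length function) and
`d > 0`.  Suppose `φ : P_d(Γ) → [0,1]` is continuous, compactly supported in `W_d(Γ)`, with
`∑_{γ∈Γ} φ(γ·x) = 1` for every `x ∈ P_d(Γ)`.  Then the function `e_φ : Γ → C₀(P_d(Γ))` given
by `e_φ(γ)(x) = φ(x)^{1/2} · φ(γ⁻¹ x)^{1/2}` defines a self-adjoint idempotent (projection) in
the reduced crossed product `C₀(P_d(Γ)) ⋊ᵣ Γ`: it satisfies `e_φ * e_φ = e_φ` for the twisted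
convolution `(f*g)(γ)(x) = ∑_{γ₁} f(γ₁)(x)·g(γ₁⁻¹γ)(γ₁⁻¹ x)` and `e_φ* = e_φ` for the
involution `f*(γ)(x) = f(γ⁻¹)(γ⁻¹ x)` (the functions being real valued); and its support
`{γ : e_φ(γ) ≠ 0}` is contained in `{γ : γ W_d(Γ) ∩ W_d(Γ) ≠ ∅}`. -/
theorem stmt17 {Γ : Type*} [Group Γ] (ℓ : Γ → ℝ)
    (hnonneg : ∀ γ : Γ, 0 ≤ ℓ γ)
    (hzero : ∀ γ : Γ, ℓ γ = 0 ↔ γ = 1)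
    (hsub : ∀ γ γ' : Γ, ℓ (γ * γ') ≤ ℓ γ + ℓ γ')
    (hsymm : ∀ γ : Γ, ℓ γ⁻¹ = ℓ γ)
    (hproper : ∀ r : ℝ, {γ : Γ | ℓ γ ≤ r}.Finite)
    {d : ℝ} (hd : 0 < d)
    (φ : RipsCplx Γ ℓ d → ℝ) (hφcont : Continuous φ)
    (hφrange : ∀ x, φ x ∈ Set.Icc (0 : ℝ) 1)
    (hφcs : HasCompactSupport φ) (hφsupp : tsupport φ ⊆ Wset Γ ℓ d)
    (hφpart : ∀ x : RipsCplx Γ ℓ d, ∑' γ : Γ, φ (translate γ x) = 1)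
    (e : Γ → RipsCplx Γ ℓ d → ℝ)
    (he : ∀ (γ : Γ) (x : RipsCplx Γ ℓ d),
      e γ x = Real.sqrt (φ x) * Real.sqrt (φ (translate γ⁻¹ x))) :
    -- `e_φ` is idempotent for the twisted convolution product:
    (∀ (γ : Γ) (x : RipsCplx Γ ℓ d),
      ∑' γ₁ : Γ, e γ₁ x * e (γ₁⁻¹ * γ) (translate γ₁⁻¹ x) = e γ x) ∧
    -- `e_φ` is self-adjoint:
    (∀ (γ : Γ) (x : RipsCplx Γ ℓ d), e γ⁻¹ (translate γ⁻¹ x) = e γ x) ∧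
    -- the support of `e_φ` is contained in `{γ : γ W_d(Γ) ∩ W_d(Γ) ≠ ∅}`:
    (∀ γ : Γ, (∃ x, e γ x ≠ 0) →
      ∃ y ∈ Wset Γ ℓ d, translate γ y ∈ Wset Γ ℓ d) := by
  refine ⟨?_, ?_, ?_⟩
  · intro γ x
    have key : ∀ γ₁ : Γ, e γ₁ x * e (γ₁⁻¹ * γ) (translate γ₁⁻¹ x)
        = (Real.sqrt (φ x) * Real.sqrt (φ (translate γ⁻¹ x))) * φ (translate γ₁⁻¹ x) := by
      intro γ₁
      rw [he, he, RipsCplx.translate_translate]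
      have h1 : (γ₁⁻¹ * γ)⁻¹ * γ₁⁻¹ = γ⁻¹ := by group
      rw [h1]
      have h2 : Real.sqrt (φ (translate γ₁⁻¹ x)) * Real.sqrt (φ (translate γ₁⁻¹ x))
          = φ (translate γ₁⁻¹ x) := Real.mul_self_sqrt (hφrange _).1
      linear_combination (Real.sqrt (φ x) * Real.sqrt (φ (translate γ⁻¹ x))) * h2
    calc ∑' γ₁ : Γ, e γ₁ x * e (γ₁⁻¹ * γ) (translate γ₁⁻¹ x)
        = ∑' γ₁ : Γ, (Real.sqrt (φ x) * Real.sqrt (φ (translate γ⁻¹ x)))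
            * φ (translate γ₁⁻¹ x) := by rw [tsum_congr key]
      _ = (Real.sqrt (φ x) * Real.sqrt (φ (translate γ⁻¹ x)))
            * ∑' γ₁ : Γ, φ (translate γ₁⁻¹ x) := tsum_mul_left
      _ = e γ x := by
            have : ∑' γ₁ : Γ, φ (translate γ₁⁻¹ x) = ∑' γ₁ : Γ, φ (translate γ₁ x) :=
              (Equiv.inv Γ).tsum_eq fun γ₁ => φ (translate γ₁ x)
            rw [this, hφpart, mul_one, he]
  · intro γ x
    rw [he, he, RipsCplx.translate_translate]
    have h1 : γ⁻¹⁻¹ * γ⁻¹ = 1 := by group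
    rw [h1, RipsCplx.translate_one, mul_comm]
  · intro γ ⟨x, hx⟩
    rw [he] at hx
    have h1 : φ x ≠ 0 := fun h => hx (by simp [h])
    have h2 : φ (translate γ⁻¹ x) ≠ 0 := fun h => hx (by simp [h])
    refine ⟨translate γ⁻¹ x, hφsupp (subset_tsupport φ h2), ?_⟩
    rw [RipsCplx.translate_translate]
    have h3 : γ * γ⁻¹ = 1 := by group
    rw [h3, RipsCplx.translate_one]
    exact hφsupp (subset_tsupport φ h1)
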